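/- For every n ≥ 0, the number of Dyck paths of semilength n with no up-run of length 3 or more equals the n-th Motzkin number, i.e., the number of Motzkin paths of length n. -/

import Mathlib

/-- The height of a path (list of up/down steps, `true` = up = +1, `false` = down = −1)
after its first `k` steps. -/
def heightAt (p : List Bool) (k : ℕ) : ℤ :=
  ((p.take k).count true : ℤ) - ((p.take k).count false : ℤ)

/-- A Dyck path: all partial sums nonnegative and total sum zero. -/
def IsDyck (p : List Bool) : Prop :=
  (∀ k, 0 ≤ heightAt p k) ∧ heightAt p p.length = 0

/-- A peak at height `h`: an up-step immediately followed by a down-step,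
the height after the up-step being `h`. -/
def HasPeakAt (p : List Bool) (h : ℤ) : Prop :=
  ∃ i, p[i]? = some true ∧ p[i+1]? = some false ∧ heightAt p (i+1) = h

/-- A valley at height `h`: a down-step immediately followed by an up-step,
the height after the down-step being `h`. -/
def HasValleyAt (p : List Bool) (h : ℤ) : Prop :=
  ∃ i, p[i]? = some false ∧ p[i+1]? = some true ∧ heightAt p (i+1) = h

/-- `p` has an up-run of length `m`: a maximal block of exactly `m` consecutive up-steps. -/
def HasUpRun (p : List Bool) (m : ℕ) : Prop :=
  ∃ i, (∀ j, j < m → p[i+j]? = some true) ∧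
    (i = 0 ∨ p[i-1]? = some false) ∧
    (p[i+m]? = some false ∨ i + m = p.length)

/-- `p` has a down-run of length `m`: a maximal block of exactly `m` consecutive down-steps. -/
def HasDownRun (p : List Bool) (m : ℕ) : Prop :=
  ∃ i, (∀ j, j < m → p[i+j]? = some false) ∧
    (i = 0 ∨ p[i-1]? = some true) ∧
    (p[i+m]? = some true ∨ i + m = p.length)

/-- Generating function of the set of Dyck paths satisfying `Q`:
the coefficient of `z^n` is the number of such paths of semilength `n`. -/
noncomputable def genFun (Q : List Bool → Prop) : PowerSeries ℕ :=
  PowerSeries.mk fun n => Set.ncard {p : List Bool | p.length = 2 * n ∧ IsDyck p ∧ Q p}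

/-- A Motzkin path: steps in `{+1, 0, −1}`, nonnegative partial sums, total sum zero. -/
def IsMotzkin (p : List ℤ) : Prop :=
  (∀ s ∈ p, s = 1 ∨ s = 0 ∨ s = -1) ∧
  (∀ k, 0 ≤ (p.take k).sum) ∧ p.sum = 0

/-! ### Auxiliary development -/

def wt (b : Bool) : ℤ := if b then 1 else -1
def S (l : List Bool) : ℤ := (l.map wt).sum
@[simp] lemma S_nil : S [] = 0 := rfl
@[simp] lemma S_cons (b l) : S (b :: l) = wt b + S l := by simp [S]
@[simp] lemma wt_true : wt true = 1 := rfl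
@[simp] lemma wt_false : wt false = -1 := rfl
lemma S_append (a b : List Bool) : S (a ++ b) = S a + S b := by simp [S]
lemma S_take_append (a b : List Bool) (k : ℕ) :
    S ((a ++ b).take k) = S (a.take k) + S (b.take (k - a.length)) := by
  rw [List.take_append, S_append]
lemma Z_take_append (a b : List ℤ) (k : ℕ) :
    ((a ++ b).take k).sum = (a.take k).sum + (b.take (k - a.length)).sum := by
  rw [List.take_append, List.sum_append]

/-- The Dyck-height version of `IsDyck`, phrased with step sums. -/
def DyckS (p : List Bool) : Prop := (∀ k, 0 ≤ S (p.take k)) ∧ S p = 0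

lemma count_sub (l : List Bool) : (l.count true : ℤ) - l.count false = S l := by
  induction l with
  | nil => simp
  | cons b l ih => cases b <;> simp [List.count_cons, S_cons] <;> omega

lemma heightAt_eq (p : List Bool) (k : ℕ) : heightAt p k = S (p.take k) :=
  count_sub (p.take k)

lemma isDyck_iff (p : List Bool) : IsDyck p ↔ DyckS p := by
  unfold IsDyck DyckS
  simp only [heightAt_eq, List.take_length]

/-! ### Splitting at the first return -/

def dsplit (d : ℕ) : List Bool → List Bool × List Bool
  | [] => ([], [])
  | b :: r =>
    if b = false ∧ d = 0 then ([], r)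
    else ((b :: (dsplit (if b then d + 1 else d - 1) r).1),
          (dsplit (if b then d + 1 else d - 1) r).2)

def msplit (d : ℕ) : List ℤ → List ℤ × List ℤ
  | [] => ([], [])
  | a :: r =>
    if a = -1 ∧ d = 0 then ([], r)
    else ((a :: (msplit (if a = 1 then d + 1 else if a = -1 then d - 1 else d) r).1),
          (msplit (if a = 1 then d + 1 else if a = -1 then d - 1 else d) r).2)

lemma dsplit_length : ∀ (r : List Bool) (d : ℕ),
    (dsplit d r).1.length + (dsplit d r).2.length ≤ r.length := by
  intro r
  induction r with
  | nil => intro d; simp [dsplit]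
  | cons b r ih =>
    intro d
    by_cases h : b = false ∧ d = 0
    · simp [dsplit, h]
    · simp only [dsplit, if_neg h, List.length_cons]
      have := ih (if b then d + 1 else d - 1)
      omega

lemma msplit_length : ∀ (r : List ℤ) (d : ℕ),
    (msplit d r).1.length + (msplit d r).2.length ≤ r.length := by
  intro r
  induction r with
  | nil => intro d; simp [msplit]
  | cons b r ih =>
    intro d
    by_cases h : b = -1 ∧ d = 0
    · simp [msplit, h]
    · simp only [msplit, if_neg h, List.length_cons]
      have := ih (if b = 1 then d + 1 else if b = -1 then d - 1 else d)
      omega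

lemma dsplit_push : ∀ (A : List Bool) (d : ℕ) (B : List Bool),
    (∀ k, 0 ≤ (d : ℤ) + S (A.take k)) → (d : ℤ) + S A = 0 →
    dsplit d (A ++ false :: B) = (A, B) := by
  intro A
  induction A with
  | nil =>
    intro d B _ h0
    have : d = 0 := by simpa using h0
    simp [dsplit, this]
  | cons a A ih =>
    intro d B h h0
    simp only [S_cons] at h0
    by_cases ha : a = true
    · subst ha
      have key : dsplit (d+1) (A ++ false :: B) = (A, B) := by
        apply ih
        · intro k
          have hk := h (k+1)
          rw [List.take_succ_cons, S_cons, wt_true] at hk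
          push_cast
          linarith
        · rw [wt_true] at h0; push_cast; linarith
      simp only [List.cons_append, dsplit, List.append_eq]
      simp [key]
    · have ha' : a = false := by simpa using ha
      subst ha'
      have hd : d ≠ 0 := by
        intro hd0
        have hk := h 1
        rw [List.take_succ_cons, S_cons, wt_false] at hk
        subst hd0
        norm_num at hk
      have hd1 : 1 ≤ d := Nat.one_le_iff_ne_zero.mpr hd
      have key : dsplit (d-1) (A ++ false :: B) = (A, B) := by
        apply ih
        · intro k
          have hk := h (k+1)
          rw [List.take_succ_cons, S_cons, wt_false] at hk
          push_cast [Nat.cast_sub hd1]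
          linarith
        · rw [wt_false] at h0; push_cast [Nat.cast_sub hd1]; linarith
      simp only [List.cons_append, dsplit, List.append_eq]
      simp [hd, key]

lemma dsplit_spec : ∀ (r : List Bool) (d : ℕ),
    (∀ k, (-1 : ℤ) ≤ (d : ℤ) + S (r.take k)) → (d : ℤ) + S r = -1 →
    ∃ A B, dsplit d r = (A, B) ∧ r = A ++ false :: B ∧
      (∀ k, 0 ≤ (d : ℤ) + S (A.take k)) ∧ (d : ℤ) + S A = 0 ∧
      (∀ k, 0 ≤ S (B.take k)) ∧ S B = 0 := by
  intro r
  induction r with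
  | nil =>
    intro d _ h0
    rw [S_nil, add_zero] at h0
    omega
  | cons b r ih =>
    intro d h h0
    simp only [S_cons] at h0
    by_cases hb : b = true
    · subst hb
      rw [wt_true] at h0
      have key := ih (d+1) (fun k => by
          have hk := h (k+1); rw [List.take_succ_cons, S_cons, wt_true] at hk
          push_cast; linarith)
        (by push_cast; linarith)
      obtain ⟨A, B, h1, h2, h3, h4, h5, h6⟩ := key
      refine ⟨true :: A, B, ?_, by rw [h2]; rfl, ?_, ?_, h5, h6⟩
      · simp only [dsplit]
        simp [h1]
      · intro k
        cases k with
        | zero => simp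
        | succ k =>
          have := h3 k
          rw [List.take_succ_cons, S_cons, wt_true]
          push_cast at this ⊢
          linarith
      · rw [S_cons, wt_true]; push_cast at h4 ⊢; linarith
    · have hb' : b = false := by simpa using hb
      subst hb'
      rw [wt_false] at h0
      by_cases hd : d = 0
      · subst hd
        refine ⟨[], r, by simp [dsplit], by simp, by simp, by simp, ?_, by simpa using h0⟩
        intro k
        have hk := h (k+1)
        rw [List.take_succ_cons, S_cons, wt_false] at hk
        simp at hk ⊢
        linarith
      · have hd1 : 1 ≤ d := Nat.one_le_iff_ne_zero.mpr hd
        have key := ih (d-1) (fun k => by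
            have hk := h (k+1); rw [List.take_succ_cons, S_cons, wt_false] at hk
            push_cast [Nat.cast_sub hd1]; linarith)
          (by push_cast [Nat.cast_sub hd1]; linarith)
        obtain ⟨A, B, h1, h2, h3, h4, h5, h6⟩ := key
        refine ⟨false :: A, B, ?_, by rw [h2]; rfl, ?_, ?_, h5, h6⟩
        · simp only [dsplit]
          simp [h1, hd]
        · intro k
          cases k with
          | zero => simp
          | succ k =>
            have := h3 k
            rw [List.take_succ_cons, S_cons, wt_false]
            push_cast [Nat.cast_sub hd1] at this ⊢
            linarith
        · rw [S_cons, wt_false]; push_cast [Nat.cast_sub hd1] at h4 ⊢; linarith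

lemma msplit_push : ∀ (A : List ℤ) (d : ℕ) (B : List ℤ),
    (∀ a ∈ A, a = 1 ∨ a = 0 ∨ a = -1) →
    (∀ k, 0 ≤ (d : ℤ) + (A.take k).sum) → (d : ℤ) + A.sum = 0 →
    msplit d (A ++ (-1) :: B) = (A, B) := by
  intro A
  induction A with
  | nil =>
    intro d B _ _ h0
    have : d = 0 := by simpa using h0
    simp [msplit, this]
  | cons a A ih =>
    intro d B hst h h0
    simp only [List.sum_cons] at h0
    have hstA : ∀ x ∈ A, x = 1 ∨ x = 0 ∨ x = -1 := fun x hx => hst x (List.mem_cons_of_mem a hx)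
    have hk1 : ∀ k, 0 ≤ (d : ℤ) + a + (A.take k).sum := by
      intro k
      have hk := h (k+1)
      rw [List.take_succ_cons, List.sum_cons] at hk
      linarith
    rcases hst a List.mem_cons_self with ha | ha | ha
    · subst ha
      have key : msplit (d+1) (A ++ (-1) :: B) = (A, B) := by
        apply ih _ _ hstA
        · intro k; have := hk1 k; push_cast; linarith
        · push_cast; linarith
      simp only [List.cons_append, msplit, List.append_eq]
      norm_num [key]
    · subst ha
      have key : msplit d (A ++ (-1) :: B) = (A, B) := by
        apply ih _ _ hstA
        · intro k; have := hk1 k; linarith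
        · linarith
      simp only [List.cons_append, msplit, List.append_eq]
      norm_num [key]
    · subst ha
      have hd : d ≠ 0 := by
        intro hd0
        have := hk1 0
        subst hd0
        norm_num at this
      have hd1 : 1 ≤ d := Nat.one_le_iff_ne_zero.mpr hd
      have key : msplit (d-1) (A ++ (-1) :: B) = (A, B) := by
        apply ih _ _ hstA
        · intro k; have := hk1 k; push_cast [Nat.cast_sub hd1]; linarith
        · push_cast [Nat.cast_sub hd1]; linarith
      simp only [List.cons_append, msplit, List.append_eq]
      simp [hd, key]

lemma msplit_spec : ∀ (r : List ℤ) (d : ℕ),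
    (∀ a ∈ r, a = 1 ∨ a = 0 ∨ a = -1) →
    (∀ k, (-1 : ℤ) ≤ (d : ℤ) + (r.take k).sum) → (d : ℤ) + r.sum = -1 →
    ∃ A B, msplit d r = (A, B) ∧ r = A ++ (-1) :: B ∧
      (∀ a ∈ A, a = 1 ∨ a = 0 ∨ a = -1) ∧
      (∀ k, 0 ≤ (d : ℤ) + (A.take k).sum) ∧ (d : ℤ) + A.sum = 0 ∧
      (∀ a ∈ B, a = 1 ∨ a = 0 ∨ a = -1) ∧
      (∀ k, 0 ≤ (B.take k).sum) ∧ B.sum = 0 := by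
  intro r
  induction r with
  | nil =>
    intro d _ _ h0
    rw [List.sum_nil, add_zero] at h0
    omega
  | cons b r ih =>
    intro d hst h h0
    simp only [List.sum_cons] at h0
    have hstr : ∀ x ∈ r, x = 1 ∨ x = 0 ∨ x = -1 := fun x hx => hst x (List.mem_cons_of_mem b hx)
    have hk1 : ∀ k, (-1:ℤ) ≤ (d : ℤ) + b + (r.take k).sum := by
      intro k
      have hk := h (k+1)
      rw [List.take_succ_cons, List.sum_cons] at hk
      linarith
    rcases hst b List.mem_cons_self with hb | hb | hb
    · subst hb
      obtain ⟨A, B, h1, h2, h3, h4, h5, h6, h7, h8⟩ :=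
        ih (d+1) hstr (fun k => by have := hk1 k; push_cast; linarith) (by push_cast; linarith)
      refine ⟨1 :: A, B, ?_, by rw [h2]; rfl, ?_, ?_, ?_, h6, h7, h8⟩
      · simp only [msplit]
        norm_num [h1]
      · intro x hx
        rcases List.mem_cons.mp hx with h | h
        · left; exact h
        · exact h3 x h
      · intro k
        cases k with
        | zero => simp
        | succ k =>
          have := h4 k
          rw [List.take_succ_cons, List.sum_cons]
          push_cast at this ⊢
          linarith
      · rw [List.sum_cons]; push_cast at h5 ⊢; linarith
    · subst hb
      obtain ⟨A, B, h1, h2, h3, h4, h5, h6, h7, h8⟩ :=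
        ih d hstr (fun k => by have := hk1 k; linarith) (by linarith)
      refine ⟨0 :: A, B, ?_, by rw [h2]; rfl, ?_, ?_, ?_, h6, h7, h8⟩
      · simp only [msplit]
        norm_num [h1]
      · intro x hx
        rcases List.mem_cons.mp hx with h | h
        · right; left; exact h
        · exact h3 x h
      · intro k
        cases k with
        | zero => simp
        | succ k =>
          have := h4 k
          rw [List.take_succ_cons, List.sum_cons]
          linarith
      · rw [List.sum_cons]; linarith
    · subst hb
      by_cases hd : d = 0
      · subst hd
        refine ⟨[], r, by simp [msplit], by simp, by simp, by simp, by simp, hstr, ?_,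
          by simpa using h0⟩
        intro k
        have := hk1 k
        simp at this ⊢
        linarith
      · have hd1 : 1 ≤ d := Nat.one_le_iff_ne_zero.mpr hd
        obtain ⟨A, B, h1, h2, h3, h4, h5, h6, h7, h8⟩ :=
          ih (d-1) hstr (fun k => by have := hk1 k; push_cast [Nat.cast_sub hd1]; linarith)
            (by push_cast [Nat.cast_sub hd1]; linarith)
        refine ⟨-1 :: A, B, ?_, by rw [h2]; rfl, ?_, ?_, ?_, h6, h7, h8⟩
        · simp only [msplit]
          simp [hd, h1]
        · intro x hx
          rcases List.mem_cons.mp hx with h | h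
          · right; right; exact h
          · exact h3 x h
        · intro k
          cases k with
          | zero => simp
          | succ k =>
            have := h4 k
            rw [List.take_succ_cons, List.sum_cons]
            push_cast [Nat.cast_sub hd1] at this ⊢
            linarith
        · rw [List.sum_cons]; push_cast [Nat.cast_sub hd1] at h5 ⊢; linarith

/-! ### The bijection -/

def toD : List ℤ → List Bool
  | [] => []
  | a :: r =>
    if a = 0 then true :: false :: toD r
    else if a = 1 then
      true :: true :: false :: (toD (msplit 0 r).1 ++ false :: toD (msplit 0 r).2)
    else []
termination_by l => l.length
decreasing_by
  all_goals (have h1 := msplit_length r 0; simp only [List.length_cons]; omega)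

def toM : List Bool → List ℤ
  | [] => []
  | true :: false :: r => 0 :: toM r
  | true :: true :: false :: r =>
      1 :: (toM (dsplit 0 r).1 ++ (-1) :: toM (dsplit 0 r).2)
  | _ => []
termination_by l => l.length
decreasing_by
  all_goals (have h1 := dsplit_length r 0; simp only [List.length_cons]; omega)

/-! ### No-triple predicate -/

def NoTriple (p : List Bool) : Prop :=
  ∀ i, ¬(p[i]? = some true ∧ p[i+1]? = some true ∧ p[i+2]? = some true)

lemma getElem?_not_true {p : List Bool} {i : ℕ} (hi : i < p.length)
    (h : p[i]? ≠ some true) : p[i]? = some false := by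
  rw [List.getElem?_eq_getElem hi] at h ⊢
  cases hb : p[i] with
  | false => rfl
  | true => exact absurd (by rw [hb]) h

lemma lt_length_of_getElem?_true {p : List Bool} {i : ℕ} (h : p[i]? = some true) :
    i < p.length := by
  by_contra hc
  rw [List.getElem?_eq_none (by omega)] at h
  exact absurd h (by simp)

lemma noUpRun_iff (p : List Bool) :
    (∀ m, 3 ≤ m → ¬ HasUpRun p m) ↔ NoTriple p := by
  constructor
  · intro h i htrip
    obtain ⟨t0, t1, t2⟩ := htrip
    have hPex : ∃ s, s ≤ i ∧ ∀ j, j < i + 1 - s → p[s+j]? = some true := by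
      refine ⟨i, le_refl i, ?_⟩
      intro j hj
      have hj0 : j = 0 := by omega
      subst hj0
      simpa using t0
    classical
    let s₀ := Nat.find hPex
    obtain ⟨hs₀i, hs₀⟩ := Nat.find_spec hPex
    have hQex : ∃ t, p[i + 3 + t]? ≠ some true := by
      refine ⟨p.length, ?_⟩
      rw [List.getElem?_eq_none (by omega)]
      exact fun hc => absurd hc (by simp)
    let t₀ := Nat.find hQex
    have hQ : p[i + 3 + t₀]? ≠ some true := Nat.find_spec hQex
    have hQmin : ∀ u, u < t₀ → p[i + 3 + u]? = some true := by
      intro u hu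
      have := Nat.find_min hQex hu
      simpa using this
    set e := i + 2 + t₀ with he
    have hrun : ∀ j, j < e + 1 - s₀ → p[s₀ + j]? = some true := by
      intro j hj
      rcases lt_or_ge (s₀ + j) (i + 1) with hc | hc
      · exact hs₀ j (by omega)
      · rcases lt_or_ge (s₀ + j) (i + 3) with hc2 | hc2
        · rcases (by omega : s₀ + j = i + 1 ∨ s₀ + j = i + 2) with h' | h'
          · rw [h']; exact t1
          · rw [h']; exact t2
        · have : s₀ + j = i + 3 + (s₀ + j - (i + 3)) := by omega
          rw [this]
          exact hQmin _ (by omega)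
    have hm3 : 3 ≤ e + 1 - s₀ := by omega
    apply h (e + 1 - s₀) hm3
    refine ⟨s₀, hrun, ?_, ?_⟩
    · rcases Nat.eq_zero_or_pos s₀ with h0 | h0
      · left; exact h0
      · right
        have hnmin : ¬(s₀ - 1 ≤ i ∧ ∀ j, j < i + 1 - (s₀ - 1) → p[(s₀-1)+j]? = some true) :=
          Nat.find_min hPex (by omega)
        push_neg at hnmin
        obtain ⟨j, hj, hjne⟩ := hnmin (by omega)
        have hj0 : j = 0 := by
          by_contra hj0
          apply hjne
          have : s₀ - 1 + j = s₀ + (j - 1) := by omega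
          rw [this]
          exact hs₀ (j-1) (by omega)
        subst hj0
        apply getElem?_not_true _ (by simpa using hjne)
        have : s₀ ≤ i := hs₀i
        have hi : i < p.length := lt_length_of_getElem?_true t0
        omega
    · have hse : s₀ + (e + 1 - s₀) = e + 1 := by omega
      rw [hse]
      rcases lt_or_ge (e+1) p.length with hc | hc
      · left
        apply getElem?_not_true hc
        have harith : e + 1 = i + 3 + t₀ := by omega
        rw [harith]
        exact hQ
      · right
        have : e < p.length := by
          apply lt_length_of_getElem?_true (p := p) (i := e)
          have := hrun (e - s₀) (by omega)
          have h' : s₀ + (e - s₀) = e := by omega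
          rwa [h'] at this
        omega
  · rintro h m hm ⟨i, hrun, _, _⟩
    exact h i ⟨by simpa using hrun 0 (by omega), by simpa using hrun 1 (by omega),
      by simpa using hrun 2 (by omega)⟩

lemma getElem?_mid (A B : List Bool) (b : Bool) : (A ++ b :: B)[A.length]? = some b := by
  rw [List.getElem?_append_right (le_refl _)]
  simp

lemma getElem?_right (A B : List Bool) (b : Bool) (k : ℕ) :
    (A ++ b :: B)[A.length + 1 + k]? = B[k]? := by
  rw [List.getElem?_append_right (by omega)]
  have : A.length + 1 + k - A.length = k + 1 := by omega
  rw [this]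
  simp

lemma noTriple_append_false (A B : List Bool) :
    NoTriple (A ++ false :: B) ↔ NoTriple A ∧ NoTriple B := by
  constructor
  · intro h
    constructor
    · intro i ⟨t0, t1, t2⟩
      have h2 : i + 2 < A.length := lt_length_of_getElem?_true t2
      exact h i ⟨by rwa [List.getElem?_append_left (by omega)],
                 by rwa [List.getElem?_append_left (by omega)],
                 by rwa [List.getElem?_append_left (by omega)]⟩
    · intro i ⟨t0, t1, t2⟩
      apply h (A.length + 1 + i)
      refine ⟨by rwa [getElem?_right], ?_, ?_⟩
      · have e : A.length + 1 + i + 1 = A.length + 1 + (i+1) := by omega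
        rw [e, getElem?_right]; exact t1
      · have e : A.length + 1 + i + 2 = A.length + 1 + (i+2) := by omega
        rw [e, getElem?_right]; exact t2
  · intro ⟨hA, hB⟩ i ⟨t0, t1, t2⟩
    rcases lt_or_ge (i+2) A.length with hc | hc
    · exact hA i ⟨by rwa [List.getElem?_append_left (by omega)] at t0,
                  by rwa [List.getElem?_append_left (by omega)] at t1,
                  by rwa [List.getElem?_append_left (by omega)] at t2⟩
    · rcases lt_or_ge i (A.length + 1) with hc2 | hc2
      · have hmid := getElem?_mid A B
        rcases (by omega : i = A.length ∨ i + 1 = A.length ∨ i + 2 = A.length) with h' | h' | h'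
        · rw [← h'] at hmid; rw [hmid false] at t0; simp at t0
        · rw [← h'] at hmid; rw [hmid false] at t1; simp at t1
        · rw [← h'] at hmid; rw [hmid false] at t2; simp at t2
      · set j := i - (A.length + 1) with hj
        apply hB j
        refine ⟨?_, ?_, ?_⟩
        · have e : i = A.length + 1 + j := by omega
          rwa [e, getElem?_right] at t0
        · have e : i + 1 = A.length + 1 + (j+1) := by omega
          rwa [e, getElem?_right] at t1
        · have e : i + 2 = A.length + 1 + (j+2) := by omega
          rwa [e, getElem?_right] at t2

lemma noTriple_nil : NoTriple [] := by
  intro i ⟨t0, _, _⟩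
  simp at t0

lemma noTriple_single (b : Bool) : NoTriple [b] := by
  intro i ⟨_, t1, _⟩
  rw [List.getElem?_eq_none (by simp)] at t1
  exact absurd t1 (by simp)

lemma noTriple_double (a b : Bool) : NoTriple [a, b] := by
  intro i ⟨_, _, t2⟩
  rw [List.getElem?_eq_none (by simp)] at t2
  exact absurd t2 (by simp)

/-! ### Dyck composition lemmas -/

lemma S_fcons_take (B : List Bool) (hB : ∀ k, 0 ≤ S (B.take k)) (m : ℕ) :
    (-1 : ℤ) ≤ S ((false :: B).take m) := by
  cases m with
  | zero => simp
  | succ m =>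
    rw [List.take_succ_cons, S_cons, wt_false]
    have := hB m
    linarith

lemma DyckS_pairUD (B : List Bool) (hB : DyckS B) : DyckS (true :: false :: B) := by
  obtain ⟨hB1, hB2⟩ := hB
  constructor
  · intro k
    match k with
    | 0 => simp
    | 1 => simp [List.take_succ_cons]
    | (m+2) =>
      rw [List.take_succ_cons, List.take_succ_cons, S_cons, S_cons, wt_true, wt_false]
      have := hB1 m
      linarith
  · rw [S_cons, S_cons, wt_true, wt_false, hB2]
    ring

lemma DyckS_UUD (A B : List Bool) (hA : DyckS A) (hB : DyckS B) :
    DyckS (true :: true :: false :: (A ++ false :: B)) := by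
  obtain ⟨hA1, hA2⟩ := hA
  obtain ⟨hB1, hB2⟩ := hB
  constructor
  · intro k
    match k with
    | 0 => simp
    | 1 => simp [List.take_succ_cons]
    | 2 => simp [List.take_succ_cons]
    | (m+3) =>
      rw [List.take_succ_cons, List.take_succ_cons, List.take_succ_cons,
        S_cons, S_cons, S_cons, wt_true, wt_false, S_take_append]
      have h1 := hA1 m
      have h2 := S_fcons_take B hB1 (m - A.length)
      linarith
  · rw [S_cons, S_cons, S_cons, wt_true, wt_false, S_append, S_cons, wt_false, hA2, hB2]
    ring

/-! ### Main lemma A: `toD` maps Motzkin paths to triple-free Dyck paths -/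

lemma toD_spec : ∀ (N : ℕ) (M : List ℤ), M.length ≤ N → IsMotzkin M →
    (toD M).length = 2 * M.length ∧ DyckS (toD M) ∧ NoTriple (toD M) ∧ toM (toD M) = M := by
  intro N
  induction N with
  | zero =>
    intro M hlen _
    have : M = [] := List.length_eq_zero_iff.mp (by omega)
    subst this
    refine ⟨by simp [toD], ⟨by simp [toD], by simp [toD]⟩, by simp [toD]; exact noTriple_nil, by simp [toD, toM]⟩
  | succ N ih =>
    intro M hlen hM
    obtain ⟨hst, hpre, hsum⟩ := hM
    match M with
    | [] =>
      refine ⟨by simp [toD], ⟨by simp [toD], by simp [toD]⟩, by simp [toD]; exact noTriple_nil, by simp [toD, toM]⟩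
    | a :: r =>
      have hstr : ∀ x ∈ r, x = 1 ∨ x = 0 ∨ x = -1 :=
        fun x hx => hst x (List.mem_cons_of_mem a hx)
      rcases hst a List.mem_cons_self with ha | ha | ha
      · -- a = 1
        subst ha
        rw [List.sum_cons] at hsum
        have hpre' : ∀ k, (-1:ℤ) ≤ (0:ℤ) + (r.take k).sum := by
          intro k
          have := hpre (k+1)
          rw [List.take_succ_cons, List.sum_cons] at this
          linarith
        obtain ⟨A, B, h1, h2, h3, h4, h5, h6, h7, h8⟩ :=
          msplit_spec r 0 hstr hpre' (by push_cast; linarith)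
        simp only [Nat.cast_zero, zero_add] at h4 h5
        have hMA : IsMotzkin A := ⟨h3, h4, h5⟩
        have hMB : IsMotzkin B := ⟨h6, h7, h8⟩
        have hlA : A.length ≤ N := by
          have := congrArg List.length h2
          simp at this
          simp at hlen
          omega
        have hlB : B.length ≤ N := by
          have := congrArg List.length h2
          simp at this
          simp at hlen
          omega
        obtain ⟨iA1, iA2, iA3, iA4⟩ := ih A hlA hMA
        obtain ⟨iB1, iB2, iB3, iB4⟩ := ih B hlB hMB
        have htoD : toD (1 :: r) =
            true :: true :: false :: (toD A ++ false :: toD B) := by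
          rw [toD]
          norm_num [h1]
        refine ⟨?_, ?_, ?_, ?_⟩
        · rw [htoD]
          have := congrArg List.length h2
          simp at this ⊢
          omega
        · rw [htoD]
          exact DyckS_UUD _ _ iA2 iB2
        · rw [htoD]
          have : true :: true :: false :: (toD A ++ false :: toD B)
              = [true, true] ++ false :: (toD A ++ false :: toD B) := rfl
          rw [this, noTriple_append_false, noTriple_append_false]
          exact ⟨noTriple_double true true, iA3, iB3⟩
        · rw [htoD, toM]
          rw [dsplit_push (toD A) 0 (toD B) (by simpa using iA2.1) (by simpa using iA2.2)]
          simp only [iA4, iB4]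
          rw [h2]
      · -- a = 0
        subst ha
        rw [List.sum_cons, zero_add] at hsum
        have hMr : IsMotzkin r := by
          refine ⟨hstr, ?_, hsum⟩
          intro k
          have := hpre (k+1)
          rwa [List.take_succ_cons, List.sum_cons, zero_add] at this
        obtain ⟨i1, i2, i3, i4⟩ := ih r (by simp at hlen; omega) hMr
        have htoD : toD (0 :: r) = true :: false :: toD r := by
          rw [toD]
          norm_num
        refine ⟨?_, ?_, ?_, ?_⟩
        · rw [htoD]
          simp only [List.length_cons, i1]
          omega
        · rw [htoD]; exact DyckS_pairUD _ i2
        · rw [htoD]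
          have : true :: false :: toD r = [true] ++ false :: toD r := rfl
          rw [this, noTriple_append_false]
          exact ⟨noTriple_single true, i3⟩
        · rw [htoD, toM, i4]
      · -- a = -1 : impossible
        subst ha
        have := hpre 1
        rw [List.take_succ_cons, List.sum_cons] at this
        simp at this

/-! ### Main lemma B: `toM` maps triple-free Dyck paths to Motzkin paths -/

lemma Z_fcons_take (B : List ℤ) (hB : ∀ k, 0 ≤ (B.take k).sum) (m : ℕ) :
    (-1 : ℤ) ≤ (((-1) :: B).take m).sum := by
  cases m with
  | zero => simp
  | succ m =>
    rw [List.take_succ_cons, List.sum_cons]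
    have := hB m
    linarith

lemma toM_spec : ∀ (N : ℕ) (p : List Bool), p.length ≤ N → DyckS p → NoTriple p →
    2 * (toM p).length = p.length ∧ IsMotzkin (toM p) ∧ toD (toM p) = p := by
  intro N
  induction N with
  | zero =>
    intro p hlen _ _
    have : p = [] := List.length_eq_zero_iff.mp (by omega)
    subst this
    exact ⟨by simp [toM], ⟨by simp [toM], by simp [toM], by simp [toM]⟩, by simp [toM, toD]⟩
  | succ N ih =>
    intro p hlen hD hT
    obtain ⟨hpre, hsum⟩ := hD
    match p with
    | [] =>
      exact ⟨by simp [toM], ⟨by simp [toM], by simp [toM], by simp [toM]⟩, by simp [toM, toD]⟩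
    | false :: q =>
      have := hpre 1
      rw [List.take_succ_cons, S_cons, wt_false] at this
      simp at this
    | [true] =>
      rw [S_cons, wt_true, S_nil] at hsum
      norm_num at hsum
    | true :: false :: r =>
      have hDr : DyckS r := by
        constructor
        · intro k
          have := hpre (k+2)
          rwa [List.take_succ_cons, List.take_succ_cons, S_cons, S_cons, wt_true, wt_false,
            show (1:ℤ) + (-1 + S (r.take k)) = S (r.take k) by ring] at this
        · rw [S_cons, S_cons, wt_true, wt_false] at hsum
          linarith
      have hTr : NoTriple r := by
        have : true :: false :: r = [true] ++ false :: r := rfl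
        rw [this, noTriple_append_false] at hT
        exact hT.2
      obtain ⟨i1, i2, i3⟩ := ih r (by simp at hlen; omega) hDr hTr
      have htoM : toM (true :: false :: r) = 0 :: toM r := by rw [toM]
      refine ⟨?_, ?_, ?_⟩
      · rw [htoM]; simp at hlen ⊢; omega
      · obtain ⟨j1, j2, j3⟩ := i2
        refine ⟨?_, ?_, ?_⟩
        · rw [htoM]
          intro x hx
          rcases List.mem_cons.mp hx with h | h
          · right; left; exact h
          · exact j1 x h
        · intro k
          rw [htoM]
          cases k with
          | zero => simp
          | succ k =>
            rw [List.take_succ_cons, List.sum_cons, zero_add]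
            exact j2 k
        · rw [htoM, List.sum_cons, zero_add]; exact j3
      · rw [htoM, toD]
        norm_num [i3]
    | [true, true] =>
      rw [S_cons, S_cons, wt_true, S_nil] at hsum
      norm_num at hsum
    | true :: true :: true :: q =>
      exact absurd ⟨by simp, by simp, by simp⟩ (hT 0)
    | true :: true :: false :: r =>
      have hpre' : ∀ k, (-1:ℤ) ≤ (0:ℤ) + S (r.take k) := by
        intro k
        have := hpre (k+3)
        rw [List.take_succ_cons, List.take_succ_cons, List.take_succ_cons,
          S_cons, S_cons, S_cons, wt_true, wt_false] at this
        linarith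
      have hsum' : (0:ℤ) + S r = -1 := by
        rw [S_cons, S_cons, S_cons, wt_true, wt_false] at hsum
        linarith
      obtain ⟨A, B, h1, h2, h3, h4, h5, h6⟩ := dsplit_spec r 0 hpre' hsum'
      simp only [Nat.cast_zero, zero_add] at h3 h4
      have hDA : DyckS A := ⟨h3, h4⟩
      have hDB : DyckS B := ⟨h5, h6⟩
      have hTAB : NoTriple A ∧ NoTriple B := by
        have e1 : true :: true :: false :: r = [true, true] ++ false :: r := rfl
        rw [e1, noTriple_append_false] at hT
        have := hT.2
        rw [h2, noTriple_append_false] at this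
        exact this
      have hlr : r.length = A.length + 1 + B.length := by
        have := congrArg List.length h2
        simp at this
        omega
      obtain ⟨iA1, iA2, iA3⟩ := ih A (by simp at hlen; omega) hDA hTAB.1
      obtain ⟨iB1, iB2, iB3⟩ := ih B (by simp at hlen; omega) hDB hTAB.2
      have htoM : toM (true :: true :: false :: r) =
          1 :: (toM A ++ (-1) :: toM B) := by
        rw [toM, h1]
      refine ⟨?_, ?_, ?_⟩
      · rw [htoM]
        simp at hlen ⊢
        omega
      · obtain ⟨jA1, jA2, jA3⟩ := iA2
        obtain ⟨jB1, jB2, jB3⟩ := iB2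
        refine ⟨?_, ?_, ?_⟩
        · rw [htoM]
          intro x hx
          rcases List.mem_cons.mp hx with h | h
          · left; exact h
          · rcases List.mem_append.mp h with h' | h'
            · exact jA1 x h'
            · rcases List.mem_cons.mp h' with h'' | h''
              · right; right; exact h''
              · exact jB1 x h''
        · intro k
          rw [htoM]
          cases k with
          | zero => simp
          | succ k =>
            rw [List.take_succ_cons, List.sum_cons, Z_take_append]
            have hA := jA2 k
            have hB := Z_fcons_take (toM B) jB2 (k - (toM A).length)
            linarith
        · rw [htoM, List.sum_cons, List.sum_append, List.sum_cons, jA3, jB3]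
          ring
      · rw [htoM, toD]
        norm_num
        rw [msplit_push (toM A) 0 (toM B) iA2.1 (by simpa using iA2.2.1)
          (by simpa using iA2.2.2)]
        simp only [iA3, iB3]
        rw [h2]

/-! ### Conclusion -/

/-- The number of Dyck paths of semilength `n` with no up-run of length 3 or more equals
the number of Motzkin paths of length `n`. -/
theorem stmt5 (n : ℕ) :
    Set.ncard {p : List Bool | p.length = 2 * n ∧ IsDyck p ∧
        (∀ m : ℕ, 3 ≤ m → ¬ HasUpRun p m)} =
      Set.ncard {p : List ℤ | p.length = n ∧ IsMotzkin p} := by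
  classical
  have hset : {p : List Bool | p.length = 2 * n ∧ IsDyck p ∧
      (∀ m : ℕ, 3 ≤ m → ¬ HasUpRun p m)}
      = toD '' {p : List ℤ | p.length = n ∧ IsMotzkin p} := by
    ext p
    simp only [Set.mem_setOf_eq, Set.mem_image]
    constructor
    · rintro ⟨hlen, hd, hnr⟩
      obtain ⟨hl, hm, hrt⟩ := toM_spec p.length p (le_refl _)
        ((isDyck_iff p).mp hd) ((noUpRun_iff p).mp hnr)
      exact ⟨toM p, ⟨by omega, hm⟩, hrt⟩
    · rintro ⟨M, ⟨hlenM, hm⟩, rfl⟩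
      obtain ⟨h1, h2, h3, h4⟩ := toD_spec M.length M (le_refl _) hm
      exact ⟨by rw [h1, hlenM], (isDyck_iff _).mpr h2, (noUpRun_iff _).mpr h3⟩
  rw [hset]
  apply Set.ncard_image_of_injOn
  intro x hx y hy hxy
  have hx' := (toD_spec x.length x (le_refl _) hx.2).2.2.2
  have hy' := (toD_spec y.length y (le_refl _) hy.2).2.2.2
  rw [← hx', ← hy', hxy]
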